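/- Threshold characterization of the constrained firm problem: Fix a game (X, λ_w, p, G, v_q, v_u, ω), a group i, and a cost threshold c̄(i), and let (μ_RE(i,·), f_RE(i,·)) be the corresponding true within-group distribution and conditional probability. Fix t ∈ [0,1] and consider the linear program of maximizing Σ_{x∈X} d_x·μ_RE(i,x)[f_RE(i,x)v_q − (1−f_RE(i,x))v_u] over {d_x}_{x∈X} ∈ [0,1]^X subject to Σ_x d_x·μ_RE(i,x)f_RE(i,x) = t·Σ_x μ_RE(i,x)f_RE(i,x). If the feasible set is nonempty, then every maximizer d̂ has threshold form in the likelihood: there exists a likelihood value l_m (m ∈ {1,…,n}) such that d̂_x = 0 whenever l(x) < l_m and d̂_x = 1 whenever l(x) > l_m. -/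

import Mathlib

/-!
Formalization of the Coate–Loury statistical discrimination model with
machine-learning (contractible) beliefs, following Zhu,
"The Impact of Equal Opportunity on Statistical Discrimination".
-/

open scoped BigOperators
open MeasureTheory

noncomputable section

attribute [local instance] Classical.propDecidable

/-- Group identities `I = {w, b}`. -/
inductive GrpI
  | w
  | b
deriving DecidableEq

instance instFintypeGrpI : Fintype GrpI :=
  ⟨{GrpI.w, GrpI.b}, fun x => by cases x <;> simp⟩

/-- Classes `Y = {q, u}` (qualified / unqualified). -/
inductive Cls
  | q
  | u
deriving DecidableEq

instance instFintypeCls : Fintype Cls :=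
  ⟨{Cls.q, Cls.u}, fun x => by cases x <;> simp⟩

/-- A game `(X, λ_w, p, G, v_q, v_u, ω)` of the Coate–Loury model.  The set of
other features is the finite product `X = X_1 × ⋯ × X_N`, encoded as the pi type
`(j : Fin N) → Xs j`.  The statistical model (Assumption 1) is encoded through a
nonempty subset `Ysub ⊆ {1, …, N}` together with the factorization
`p(x | i, y) = pY(x_𝒴 | y) · pC(x_{-𝒴} | i, x_𝒴)`.  The cost distribution is
given by an everywhere positive density `g` with `∫ g = 1` and `∫ |c| g(c) dc < ∞`. -/
structure Game (N : ℕ) (Xs : Fin N → Type) [∀ j, Fintype (Xs j)]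
    [∀ j, Nonempty (Xs j)] where
  lamw : ℝ
  lamw_pos : 0 < lamw
  lamw_lt_one : lamw < 1
  Ysub : Finset (Fin N)
  Ysub_nonempty : Ysub.Nonempty
  pY : ((j : Ysub) → Xs j.1) → Cls → ℝ
  pC : GrpI → ((j : Fin N) → Xs j) → ℝ
  pY_pos : ∀ xY y, 0 < pY xY y
  pC_pos : ∀ i x, 0 < pC i x
  pY_sum : ∀ y, ∑ xY, pY xY y = 1
  pC_sum : ∀ (i : GrpI) (xY : (j : Ysub) → Xs j.1),
    ∑ x ∈ Finset.univ.filter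
        (fun x : (j : Fin N) → Xs j => (fun j : Ysub => x j.1) = xY),
      pC i x = 1
  g : ℝ → ℝ
  g_pos : ∀ c, 0 < g c
  g_int : Integrable g
  g_norm : (∫ c, g c) = 1
  g_abs_int : Integrable fun c => |c| * g c
  vq : ℝ
  vu : ℝ
  om : ℝ
  vq_pos : 0 < vq
  vu_pos : 0 < vu
  om_pos : 0 < om

section Policies

variable {N : ℕ} {Xs : Fin N → Type}

/-- A decision policy `d : I × X → [0,1]`. -/
def IsPolicy (d : GrpI → ((j : Fin N) → Xs j) → ℝ) : Prop :=
  ∀ i x, d i x ∈ Set.Icc (0 : ℝ) 1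

/-- A decision policy when data is color-blind, `d_cb : X → [0,1]`. -/
def IsCbPolicy (dcb : ((j : Fin N) → Xs j) → ℝ) : Prop :=
  ∀ x, dcb x ∈ Set.Icc (0 : ℝ) 1

/-- `S ⊆ {1, …, N}` has the dependence property for the belief `f`:
`f` depends on `(i, x)` only up to `(i, x_S)`. -/
def DepProp {I : Type} (f : I → ((j : Fin N) → Xs j) → ℝ)
    (S : Finset (Fin N)) : Prop :=
  ∀ (i : I) (x x' : (j : Fin N) → Xs j), (∀ j ∈ S, x j = x' j) → f i x = f i x'

/-- The minimal subset `Ŷ(f)` with the dependence property. -/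
def minDep {I : Type} (f : I → ((j : Fin N) → Xs j) → ℝ) : Finset (Fin N) :=
  Finset.univ.filter fun j => ∀ S : Finset (Fin N), DepProp f S → j ∈ S

variable [∀ j, Fintype (Xs j)]

/-- Full-support probability distributions on `I × X` (the set `Δ°(I × X)`). -/
def FullSupp (μ : GrpI → ((j : Fin N) → Xs j) → ℝ) : Prop :=
  (∀ i x, 0 < μ i x) ∧ ∑ i, ∑ x, μ i x = 1

/-- Beliefs valued in `(0, 1)`. -/
def OpenBelief (f : GrpI → ((j : Fin N) → Xs j) → ℝ) : Prop :=
  ∀ i x, f i x ∈ Set.Ioo (0 : ℝ) 1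

/-- Acceptance rate of group `i`. -/
def AR (i : GrpI) (d μ : GrpI → ((j : Fin N) → Xs j) → ℝ) : ℝ :=
  (∑ x, d i x * μ i x) / ∑ x, μ i x

/-- True positive rate of group `i`. -/
def TP (i : GrpI) (d μ f : GrpI → ((j : Fin N) → Xs j) → ℝ) : ℝ :=
  (∑ x, d i x * μ i x * f i x) / ∑ x, μ i x * f i x

/-- The equal opportunity control `k(X, μ, f)`. -/
def EOset (μ f : GrpI → ((j : Fin N) → Xs j) → ℝ) :
    Set (GrpI → ((j : Fin N) → Xs j) → ℝ) :=
  {d | IsPolicy d ∧ TP GrpI.w d μ f = TP GrpI.b d μ f}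

/-- The color-blind control: all color-blind decision policies. -/
def CBset : Set (GrpI → ((j : Fin N) → Xs j) → ℝ) :=
  {d | IsPolicy d ∧ ∀ x, d GrpI.w x = d GrpI.b x}

/-- The no proxies control: policies depending on `(i,x)` only through `x_{Ŷ(f)}`. -/
def NoProxies (_μ f : GrpI → ((j : Fin N) → Xs j) → ℝ) :
    Set (GrpI → ((j : Fin N) → Xs j) → ℝ) :=
  {d | IsPolicy d ∧
    ∀ i i' x x', (∀ j ∈ minDep f, x j = x' j) → d i x = d i' x'}

/-- `ℓ²` distance between decision policies. -/
def polDist (d d' : GrpI → ((j : Fin N) → Xs j) → ℝ) : ℝ :=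
  Real.sqrt (∑ i, ∑ x, (d i x - d' i x) ^ 2)

/-- `ℓ²` distance between pairs `(μ, f)`. -/
def pairDist (μ f μ' f' : GrpI → ((j : Fin N) → Xs j) → ℝ) : ℝ :=
  Real.sqrt ((∑ i, ∑ x, (μ i x - μ' i x) ^ 2) + ∑ i, ∑ x, (f i x - f' i x) ^ 2)

/-- `ℓ²` distance between strategy profiles `(c̄, d)`. -/
def profDist (c : GrpI → ℝ) (d : GrpI → ((j : Fin N) → Xs j) → ℝ)
    (c' : GrpI → ℝ) (d' : GrpI → ((j : Fin N) → Xs j) → ℝ) : ℝ :=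
  Real.sqrt ((∑ i, (c i - c' i) ^ 2) + ∑ i, ∑ x, (d i x - d' i x) ^ 2)

end Policies

/-- Upper hemicontinuity of a correspondence on a set. -/
def UpperHemicontinuousOnCorr {α β : Type*} [TopologicalSpace α] [TopologicalSpace β]
    (F : α → Set β) (S : Set α) : Prop :=
  ∀ a ∈ S, ∀ V : Set β, IsOpen V → F a ⊆ V → ∀ᶠ a' in nhdsWithin a S, F a' ⊆ V

/-- Lower hemicontinuity of a correspondence on a set. -/
def LowerHemicontinuousOnCorr {α β : Type*} [TopologicalSpace α] [TopologicalSpace β]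
    (F : α → Set β) (S : Set α) : Prop :=
  ∀ a ∈ S, ∀ V : Set β, IsOpen V → (F a ∩ V).Nonempty →
    ∀ᶠ a' in nhdsWithin a S, (F a' ∩ V).Nonempty

namespace Game

variable {N : ℕ} {Xs : Fin N → Type} [∀ j, Fintype (Xs j)] [∀ j, Nonempty (Xs j)]
variable (Γ : Game N Xs)

/-- Projection `x ↦ x_𝒴`. -/
def proj (x : (j : Fin N) → Xs j) : (j : Γ.Ysub) → Xs j.1 := fun j => x j.1

/-- `p(x | i, y) = p(x_𝒴 | y) · p(x_{-𝒴} | i, x_𝒴)`. -/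
def p (i : GrpI) (x : (j : Fin N) → Xs j) (y : Cls) : ℝ :=
  Γ.pY (Γ.proj x) y * Γ.pC i x

/-- Group probabilities `λ_w`, `λ_b = 1 - λ_w`. -/
def lam : GrpI → ℝ := fun i =>
  match i with
  | GrpI.w => Γ.lamw
  | GrpI.b => 1 - Γ.lamw

/-- The CDF `G` of the cost distribution. -/
def G (c : ℝ) : ℝ := ∫ t in Set.Iic c, Γ.g t

/-- The likelihood function `l(x) = p(x_𝒴 | q) / p(x_𝒴 | u)`. -/
def lhd (x : (j : Fin N) → Xs j) : ℝ :=
  Γ.pY (Γ.proj x) Cls.q / Γ.pY (Γ.proj x) Cls.u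

/-- The likelihood function on `X_𝒴`. -/
def lhdY (xY : (j : Γ.Ysub) → Xs j.1) : ℝ := Γ.pY xY Cls.q / Γ.pY xY Cls.u

/-- The set of likelihood values `{l_1 < … < l_n}`. -/
def LVset : Set ℝ := Set.range Γ.lhd

/-- The assumption that `1` is not a likelihood value
(equivalently, `WW` is single-peaked). -/
def OneNotLV : Prop := (1 : ℝ) ∉ Γ.LVset

/-- The largest likelihood value `l_n`. -/
def lmax : ℝ := sSup Γ.LVset

/-- `⌈ℓ⌉`: the smallest likelihood value `≥ ℓ`. -/
def lceil (ℓ : ℝ) : ℝ := sInf {v | v ∈ Γ.LVset ∧ ℓ ≤ v}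

/-- `⌈ℓ⌉⁻`: the next smallest likelihood value below `⌈ℓ⌉` (or `l_0 = 0`). -/
def lceilm (ℓ : ℝ) : ℝ := sSup (insert 0 {v | v ∈ Γ.LVset ∧ v < Γ.lceil ℓ})

/-- The smallest likelihood value `> ℓ`. -/
def lnext (ℓ : ℝ) : ℝ := sInf {v | v ∈ Γ.LVset ∧ ℓ < v}

/-- The true distribution of features `μ_RE` given cost thresholds `c̄`. -/
def muRE (c : GrpI → ℝ) (i : GrpI) (x : (j : Fin N) → Xs j) : ℝ :=
  Γ.lam i * (Γ.G (c i) * Γ.p i x Cls.q + (1 - Γ.G (c i)) * Γ.p i x Cls.u)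

/-- The true conditional probability (calibrated belief) `f_RE` given `c̄`. -/
def fRE (c : GrpI → ℝ) (i : GrpI) (x : (j : Fin N) → Xs j) : ℝ :=
  Γ.G (c i) * Γ.p i x Cls.q /
    (Γ.G (c i) * Γ.p i x Cls.q + (1 - Γ.G (c i)) * Γ.p i x Cls.u)

/-- Utility `U_i(c̄(i), d(i))` of the representative `i`-applicant. -/
def Uapp (i : GrpI) (ci : ℝ) (di : ((j : Fin N) → Xs j) → ℝ) : ℝ :=
  Γ.om * ∑ x, (Γ.G ci * Γ.p i x Cls.q + (1 - Γ.G ci) * Γ.p i x Cls.u) * di x -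
    ∫ t in Set.Iic ci, t * Γ.g t

/-- Firm utility `U_F(d, μ, f)`. -/
def UF (d μ f : GrpI → ((j : Fin N) → Xs j) → ℝ) : ℝ :=
  ∑ i, ∑ x, d i x * μ i x * (f i x * Γ.vq - (1 - f i x) * Γ.vu)

/-- The color-blind true distribution of features `μ_cb,RE`. -/
def mucbRE (c : GrpI → ℝ) (x : (j : Fin N) → Xs j) : ℝ :=
  Γ.muRE c GrpI.w x + Γ.muRE c GrpI.b x

/-- The color-blind true conditional probability `f_cb,RE`. -/
def fcbRE (c : GrpI → ℝ) (x : (j : Fin N) → Xs j) : ℝ :=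
  (Γ.muRE c GrpI.w x * Γ.fRE c GrpI.w x + Γ.muRE c GrpI.b x * Γ.fRE c GrpI.b x) /
    Γ.mucbRE c x

/-- Firm utility when data is color-blind. -/
def UFcb (dcb μcb fcb : ((j : Fin N) → Xs j) → ℝ) : ℝ :=
  ∑ x, dcb x * μcb x * (fcb x * Γ.vq - (1 - fcb x) * Γ.vu)

/-- `d(i | l_m)`: conditional acceptance probability at likelihood value `lv`. -/
def dcond (i : GrpI) (di : ((j : Fin N) → Xs j) → ℝ) (lv : ℝ) : ℝ :=
  (∑ x ∈ Finset.univ.filter (fun x => Γ.lhd x = lv), Γ.p i x Cls.q * di x) /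
    ∑ x ∈ Finset.univ.filter (fun x => Γ.lhd x = lv), Γ.p i x Cls.q

/-- The within-group policy `d(i)` is associated with the likelihood mixture `ℓ`. -/
def AssociatedWith (i : GrpI) (di : ((j : Fin N) → Xs j) → ℝ) (ℓ : ℝ) : Prop :=
  0 ≤ ℓ ∧ ℓ ≤ Γ.lmax ∧
    ∀ lv ∈ Γ.LVset,
      (Γ.lceil ℓ < lv → Γ.dcond i di lv = 1) ∧
      (lv = Γ.lceil ℓ →
        Γ.dcond i di lv = (Γ.lceil ℓ - ℓ) / (Γ.lceil ℓ - Γ.lceilm ℓ)) ∧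
      (lv < Γ.lceil ℓ → Γ.dcond i di lv = 0)

/-- A decision policy is fair if both within-group policies are associated with
the same likelihood mixture. -/
def Fair (d : GrpI → ((j : Fin N) → Xs j) → ℝ) : Prop :=
  ∃ ℓ, Γ.AssociatedWith GrpI.w (d GrpI.w) ℓ ∧ Γ.AssociatedWith GrpI.b (d GrpI.b) ℓ

/-- `WW(l_m) = ω ∑_{x_𝒴 : l(x_𝒴) > l_m} (p(x_𝒴|q) - p(x_𝒴|u))`. -/
def WWval (t : ℝ) : ℝ :=
  Γ.om * ∑ xY ∈ Finset.univ.filter (fun xY => t < Γ.lhdY xY),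
    (Γ.pY xY Cls.q - Γ.pY xY Cls.u)

/-- The piecewise-linear function `WW` interpolating the points `(l_m, WW(l_m))`. -/
def WW (ℓ : ℝ) : ℝ :=
  if Γ.lceil ℓ = Γ.lceilm ℓ then Γ.WWval (Γ.lceil ℓ)
  else
    (Γ.WWval (Γ.lceilm ℓ) * (Γ.lceil ℓ - ℓ) +
        Γ.WWval (Γ.lceil ℓ) * (ℓ - Γ.lceilm ℓ)) /
      (Γ.lceil ℓ - Γ.lceilm ℓ)

/-- `EĒ(l_m)`: the unique cost with `G(EĒ(l_m)) = 1 / ((v_q/v_u) l_m + 1)`. -/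
def EEbar (lv : ℝ) : ℝ := sInf {cc | 1 / (Γ.vq / Γ.vu * lv + 1) ≤ Γ.G cc}

/-- The correspondence `EE : [0, l_n] ⇒ ℝ`. -/
def EE (ℓ : ℝ) : Set ℝ :=
  if ℓ = 0 then Set.Ici (Γ.EEbar (Γ.lceil 0))
  else if ℓ = Γ.lmax then Set.Iic (Γ.EEbar Γ.lmax)
  else if ℓ ∈ Γ.LVset then Set.Icc (Γ.EEbar (Γ.lnext ℓ)) (Γ.EEbar ℓ)
  else {Γ.EEbar (Γ.lceil ℓ)}

/-- Each representative applicant's cost threshold is a best response to `d`. -/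
def BestResponds (c : GrpI → ℝ) (d : GrpI → ((j : Fin N) → Xs j) → ℝ) : Prop :=
  ∀ (i : GrpI) (c' : ℝ), Γ.Uapp i c' (d i) ≤ Γ.Uapp i (c i) (d i)

/-- An (un-controlled) equilibrium. -/
def IsEquilibrium (c : GrpI → ℝ) (d : GrpI → ((j : Fin N) → Xs j) → ℝ) : Prop :=
  IsPolicy d ∧ Γ.BestResponds c d ∧
    ∀ d', IsPolicy d' →
      Γ.UF d' (Γ.muRE c) (Γ.fRE c) ≤ Γ.UF d (Γ.muRE c) (Γ.fRE c)

/-- A `k`-controlled equilibrium, for the control `(μ, f) ↦ K μ f`. -/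
def IsControlledEq
    (K : (GrpI → ((j : Fin N) → Xs j) → ℝ) → (GrpI → ((j : Fin N) → Xs j) → ℝ) →
      Set (GrpI → ((j : Fin N) → Xs j) → ℝ))
    (c : GrpI → ℝ) (d : GrpI → ((j : Fin N) → Xs j) → ℝ) : Prop :=
  d ∈ K (Γ.muRE c) (Γ.fRE c) ∧ Γ.BestResponds c d ∧
    ∀ d' ∈ K (Γ.muRE c) (Γ.fRE c),
      Γ.UF d' (Γ.muRE c) (Γ.fRE c) ≤ Γ.UF d (Γ.muRE c) (Γ.fRE c)

/-- `𝒮_k(μ, f)`: firm-optimal policies under the control `K` at `(μ, f)`. -/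
def Smax
    (K : (GrpI → ((j : Fin N) → Xs j) → ℝ) → (GrpI → ((j : Fin N) → Xs j) → ℝ) →
      Set (GrpI → ((j : Fin N) → Xs j) → ℝ))
    (μ f : GrpI → ((j : Fin N) → Xs j) → ℝ) :
    Set (GrpI → ((j : Fin N) → Xs j) → ℝ) :=
  {d | d ∈ K μ f ∧ ∀ d' ∈ K μ f, Γ.UF d' μ f ≤ Γ.UF d μ f}

/-- A `k`-controlled `ε`-equilibrium. -/
def IsCtrlEpsEq
    (K : (GrpI → ((j : Fin N) → Xs j) → ℝ) → (GrpI → ((j : Fin N) → Xs j) → ℝ) →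
      Set (GrpI → ((j : Fin N) → Xs j) → ℝ))
    (ε : ℝ) (c : GrpI → ℝ) (d : GrpI → ((j : Fin N) → Xs j) → ℝ) : Prop :=
  ∃ μ f, FullSupp μ ∧ OpenBelief f ∧
    pairDist μ f (Γ.muRE c) (Γ.fRE c) ≤ ε ∧
    Γ.BestResponds c d ∧ d ∈ K μ f ∧ ∀ d' ∈ K μ f, Γ.UF d' μ f ≤ Γ.UF d μ f

/-- Best responses of applicants to a color-blind policy. -/
def BestRespondsCb (c : GrpI → ℝ) (dcb : ((j : Fin N) → Xs j) → ℝ) : Prop :=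
  ∀ (i : GrpI) (c' : ℝ), Γ.Uapp i c' dcb ≤ Γ.Uapp i (c i) dcb

/-- An equilibrium when data is color-blind (unrestricted control). -/
def IsCbEquilibrium (c : GrpI → ℝ) (dcb : ((j : Fin N) → Xs j) → ℝ) : Prop :=
  IsCbPolicy dcb ∧ Γ.BestRespondsCb c dcb ∧
    ∀ dcb', IsCbPolicy dcb' →
      Γ.UFcb dcb' (Γ.mucbRE c) (Γ.fcbRE c) ≤ Γ.UFcb dcb (Γ.mucbRE c) (Γ.fcbRE c)

/-- A `k_cb`-controlled equilibrium when data is color-blind. -/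
def IsCbControlledEq (K : Set (((j : Fin N) → Xs j) → ℝ)) (c : GrpI → ℝ)
    (dcb : ((j : Fin N) → Xs j) → ℝ) : Prop :=
  dcb ∈ K ∧ Γ.BestRespondsCb c dcb ∧
    ∀ dcb' ∈ K,
      Γ.UFcb dcb' (Γ.mucbRE c) (Γ.fcbRE c) ≤ Γ.UFcb dcb (Γ.mucbRE c) (Γ.fcbRE c)

end Game

/-- A control when data is color-blind: for each `X` and each
`(μ_cb, f_cb) ∈ Δ°(X) × (0,1)^X` it specifies a nonempty compact set of
color-blind decision policies. -/
structure CbControl : Type 1 where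
  sets : ∀ (N : ℕ) (Xs : Fin N → Type) [∀ j, Fintype (Xs j)] [∀ j, Nonempty (Xs j)],
    (((j : Fin N) → Xs j) → ℝ) → (((j : Fin N) → Xs j) → ℝ) →
      Set (((j : Fin N) → Xs j) → ℝ)
  nonempty : ∀ (N : ℕ) (Xs : Fin N → Type) [∀ j, Fintype (Xs j)]
    [∀ j, Nonempty (Xs j)] (μ f : ((j : Fin N) → Xs j) → ℝ),
    (∀ x, 0 < μ x) → (∑ x, μ x = 1) → (∀ x, f x ∈ Set.Ioo (0 : ℝ) 1) →
    (sets N Xs μ f).Nonempty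
  compact : ∀ (N : ℕ) (Xs : Fin N → Type) [∀ j, Fintype (Xs j)]
    [∀ j, Nonempty (Xs j)] (μ f : ((j : Fin N) → Xs j) → ℝ),
    (∀ x, 0 < μ x) → (∑ x, μ x = 1) → (∀ x, f x ∈ Set.Ioo (0 : ℝ) 1) →
    IsCompact (sets N Xs μ f)
  mem_policy : ∀ (N : ℕ) (Xs : Fin N → Type) [∀ j, Fintype (Xs j)]
    [∀ j, Nonempty (Xs j)] (μ f : ((j : Fin N) → Xs j) → ℝ),
    (∀ x, 0 < μ x) → (∑ x, μ x = 1) → (∀ x, f x ∈ Set.Ioo (0 : ℝ) 1) →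
    sets N Xs μ f ⊆ {dcb | IsCbPolicy dcb}

section AuxLemmas

variable {N : ℕ} {Xs : Fin N → Type} [∀ j, Fintype (Xs j)] [∀ j, Nonempty (Xs j)]

lemma Game.G_pos (Γ : Game N Xs) (cc : ℝ) : 0 < Γ.G cc := by
  unfold Game.G
  rw [MeasureTheory.setIntegral_pos_iff_support_of_nonneg_ae
    (Filter.Eventually.of_forall fun t => (Γ.g_pos t).le) Γ.g_int.integrableOn]
  have hsupp : Function.support Γ.g = Set.univ := by
    ext u; simp [Function.support, (Γ.g_pos u).ne']
  rw [hsupp, Set.univ_inter, Real.volume_Iic]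
  exact ENNReal.zero_lt_top

lemma Game.G_lt_one (Γ : Game N Xs) (cc : ℝ) : Γ.G cc < 1 := by
  have hadd := MeasureTheory.integral_add_compl (measurableSet_Iic (a := cc)) Γ.g_int
  have hpos : 0 < ∫ t in (Set.Iic cc)ᶜ, Γ.g t := by
    rw [MeasureTheory.setIntegral_pos_iff_support_of_nonneg_ae
      (Filter.Eventually.of_forall fun t => (Γ.g_pos t).le) Γ.g_int.integrableOn]
    have hsupp : Function.support Γ.g = Set.univ := by
      ext u; simp [Function.support, (Γ.g_pos u).ne']
    rw [hsupp, Set.univ_inter, Set.compl_Iic, Real.volume_Ioi]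
    exact ENNReal.zero_lt_top
  have : Γ.G cc + ∫ t in (Set.Iic cc)ᶜ, Γ.g t = 1 := by
    rw [Game.G, hadd, Γ.g_norm]
  linarith

end AuxLemmas

/-- **Threshold characterization of the constrained firm problem.** Every
maximizer of the firm's within-group objective over `[0,1]^X` subject to a
fixed true positive rate `t` has threshold form in the likelihood: there is a
likelihood value `l_m` with `d̂_x = 0` below it and `d̂_x = 1` above it. -/
theorem constrained_firm_problem_threshold
    {N : ℕ} {Xs : Fin N → Type} [∀ j, Fintype (Xs j)] [∀ j, Nonempty (Xs j)]
    (Γ : Game N Xs) (i : GrpI) (c : GrpI → ℝ) (t : ℝ)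
    (ht : t ∈ Set.Icc (0 : ℝ) 1)
    (dh : ((j : Fin N) → Xs j) → ℝ)
    (hfeas : (∀ x, dh x ∈ Set.Icc (0 : ℝ) 1) ∧
      ∑ x, dh x * Γ.muRE c i x * Γ.fRE c i x =
        t * ∑ x, Γ.muRE c i x * Γ.fRE c i x)
    (hmax : ∀ d' : ((j : Fin N) → Xs j) → ℝ,
      (∀ x, d' x ∈ Set.Icc (0 : ℝ) 1) →
      (∑ x, d' x * Γ.muRE c i x * Γ.fRE c i x =
        t * ∑ x, Γ.muRE c i x * Γ.fRE c i x) →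
      ∑ x, d' x * Γ.muRE c i x *
          (Γ.fRE c i x * Γ.vq - (1 - Γ.fRE c i x) * Γ.vu) ≤
        ∑ x, dh x * Γ.muRE c i x *
          (Γ.fRE c i x * Γ.vq - (1 - Γ.fRE c i x) * Γ.vu)) :
    ∃ lm ∈ Γ.LVset, ∀ x,
      (Γ.lhd x < lm → dh x = 0) ∧ (lm < Γ.lhd x → dh x = 1) := by
  classical
  obtain ⟨hd01, hcon⟩ := hfeas
  have hG0 : 0 < Γ.G (c i) := Γ.G_pos _
  have hG1 : Γ.G (c i) < 1 := Γ.G_lt_one _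
  have hlam : 0 < Γ.lam i := by
    cases i <;> simp [Game.lam] <;> linarith [Γ.lamw_pos, Γ.lamw_lt_one]
  have hp : ∀ (x) (y : Cls), 0 < Γ.p i x y := fun x y =>
    mul_pos (Γ.pY_pos _ _) (Γ.pC_pos _ _)
  have hD : ∀ x, (0:ℝ) <
      Γ.G (c i) * Γ.p i x Cls.q + (1 - Γ.G (c i)) * Γ.p i x Cls.u := fun x =>
    add_pos (mul_pos hG0 (hp x _)) (mul_pos (by linarith) (hp x _))
  have hMf : ∀ x, Γ.muRE c i x * Γ.fRE c i x =
      Γ.lam i * (Γ.G (c i) * Γ.p i x Cls.q) := by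
    intro x
    unfold Game.muRE Game.fRE
    field_simp [(hD x).ne']
  have hWf : ∀ x, Γ.muRE c i x * (Γ.fRE c i x * Γ.vq - (1 - Γ.fRE c i x) * Γ.vu) =
      Γ.lam i * (Γ.G (c i) * Γ.p i x Cls.q * Γ.vq -
        (1 - Γ.G (c i)) * Γ.p i x Cls.u * Γ.vu) := by
    intro x
    unfold Game.muRE Game.fRE
    field_simp [(hD x).ne']
    ring
  -- Exchange lemma
  have key : ∀ x x', Γ.lhd x < Γ.lhd x' → dh x = 0 ∨ dh x' = 1 := by
    intro x x' hll
    by_contra hcon2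
    push_neg at hcon2
    obtain ⟨hx0, hx1⟩ := hcon2
    have hxlt : 0 < dh x := lt_of_le_of_ne (hd01 x).1 (Ne.symm hx0)
    have hx'lt : dh x' < 1 := lt_of_le_of_ne (hd01 x').2 hx1
    have hne : x ≠ x' := fun h => absurd (h ▸ hll) (lt_irrefl _)
    set M : ℝ := Γ.muRE c i x * Γ.fRE c i x with hM
    set M' : ℝ := Γ.muRE c i x' * Γ.fRE c i x' with hM'
    have hMpos : 0 < M := by
      rw [hM, hMf]; exact mul_pos hlam (mul_pos hG0 (hp x _))
    have hM'pos : 0 < M' := by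
      rw [hM', hMf]; exact mul_pos hlam (mul_pos hG0 (hp x' _))
    set ε : ℝ := min (dh x * M) ((1 - dh x') * M') with hε
    have hεpos : 0 < ε :=
      lt_min (mul_pos hxlt hMpos) (mul_pos (by linarith) hM'pos)
    set d' : ((j : Fin N) → Xs j) → ℝ :=
      fun z => if z = x then dh x - ε / M else if z = x' then dh x' + ε / M' else dh z
      with hd'
    have hd'x : d' x = dh x - ε / M := by simp [hd']
    have hd'x' : d' x' = dh x' + ε / M' := by simp [hd', hne.symm]
    have hsplit : ∀ A : ((j : Fin N) → Xs j) → ℝ,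
        ∑ z, d' z * A z = ∑ z, dh z * A z - ε / M * A x + ε / M' * A x' := by
      intro A
      have h1 : ∀ z, d' z * A z =
          dh z * A z + ((if z = x then -(ε / M) * A z else 0) +
            (if z = x' then ε / M' * A z else 0)) := by
        intro z
        by_cases h : z = x
        · subst h; simp [hd'x, if_neg hne]; ring
        · by_cases h' : z = x'
          · subst h'; simp [hd'x', h]; ring
          · simp [hd', h, h']
      rw [Finset.sum_congr rfl (fun z _ => h1 z), Finset.sum_add_distrib,
        Finset.sum_add_distrib, Finset.sum_ite_eq' Finset.univ x,
        Finset.sum_ite_eq' Finset.univ x']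
      simp
      ring
    have hd'01 : ∀ z, d' z ∈ Set.Icc (0:ℝ) 1 := by
      intro z
      by_cases h : z = x
      · rw [h, hd'x]
        constructor
        · have : ε / M ≤ dh x := by
            rw [div_le_iff₀ hMpos]; exact min_le_left _ _
          linarith
        · have : 0 < ε / M := div_pos hεpos hMpos
          linarith [(hd01 x).2]
      · by_cases h' : z = x'
        · rw [h', hd'x']
          constructor
          · have : 0 < ε / M' := div_pos hεpos hM'pos
            linarith [(hd01 x').1]
          · have : ε / M' ≤ 1 - dh x' := by
              rw [div_le_iff₀ hM'pos]; exact min_le_right _ _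
            linarith
        · simp only [hd', if_neg h, if_neg h']
          exact hd01 z
    have hcon' : ∑ z, d' z * Γ.muRE c i z * Γ.fRE c i z =
        t * ∑ z, Γ.muRE c i z * Γ.fRE c i z := by
      have h2 := hsplit (fun z => Γ.muRE c i z * Γ.fRE c i z)
      calc ∑ z, d' z * Γ.muRE c i z * Γ.fRE c i z
          = ∑ z, d' z * (Γ.muRE c i z * Γ.fRE c i z) := by
            simp [mul_assoc]
        _ = ∑ z, dh z * (Γ.muRE c i z * Γ.fRE c i z)
              - ε / M * (Γ.muRE c i x * Γ.fRE c i x)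
              + ε / M' * (Γ.muRE c i x' * Γ.fRE c i x') := h2
        _ = ∑ z, dh z * Γ.muRE c i z * Γ.fRE c i z := by
            rw [← hM, ← hM', div_mul_cancel₀ _ hMpos.ne',
              div_mul_cancel₀ _ hM'pos.ne']
            simp [mul_assoc]
        _ = t * ∑ z, Γ.muRE c i z * Γ.fRE c i z := hcon
    have hobj := hmax d' hd'01 hcon'
    set W : ((j : Fin N) → Xs j) → ℝ :=
      fun z => Γ.muRE c i z * (Γ.fRE c i z * Γ.vq - (1 - Γ.fRE c i z) * Γ.vu)
      with hWdef
    have h3 : ∑ z, d' z * W z = ∑ z, dh z * W z - ε / M * W x + ε / M' * W x' :=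
      hsplit W
    have hlt : Γ.pY (Γ.proj x) Cls.q * Γ.pY (Γ.proj x') Cls.u <
        Γ.pY (Γ.proj x') Cls.q * Γ.pY (Γ.proj x) Cls.u := by
      have h := hll
      rw [Game.lhd, Game.lhd,
        div_lt_div_iff₀ (Γ.pY_pos _ _) (Γ.pY_pos _ _)] at h
      exact h
    have hdiff : W x' * M - W x * M' =
        (Γ.lam i)^2 * Γ.G (c i) * (1 - Γ.G (c i)) * Γ.vu *
          (Γ.pC i x * Γ.pC i x') *
          (Γ.pY (Γ.proj x') Cls.q * Γ.pY (Γ.proj x) Cls.u -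
            Γ.pY (Γ.proj x) Cls.q * Γ.pY (Γ.proj x') Cls.u) := by
      rw [hM, hM', hWdef]
      simp only
      rw [hWf x, hWf x', hMf x, hMf x']
      unfold Game.p
      ring
    have hWlt : W x * M' < W x' * M := by
      have hpos : 0 < (Γ.lam i)^2 * Γ.G (c i) * (1 - Γ.G (c i)) * Γ.vu *
          (Γ.pC i x * Γ.pC i x') *
          (Γ.pY (Γ.proj x') Cls.q * Γ.pY (Γ.proj x) Cls.u -
            Γ.pY (Γ.proj x) Cls.q * Γ.pY (Γ.proj x') Cls.u) := by
        have h1 : 0 < (Γ.lam i)^2 * Γ.G (c i) * (1 - Γ.G (c i)) * Γ.vu *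
            (Γ.pC i x * Γ.pC i x') :=
          mul_pos (mul_pos (mul_pos (mul_pos (pow_pos hlam 2) hG0)
            (by linarith)) Γ.vu_pos) (mul_pos (Γ.pC_pos i x) (Γ.pC_pos i x'))
        exact mul_pos h1 (by linarith)
      linarith [hdiff]
    have hkey : ε / M * W x < ε / M' * W x' := by
      rw [div_mul_eq_mul_div, div_mul_eq_mul_div,
        div_lt_div_iff₀ hMpos hM'pos]
      have := mul_lt_mul_of_pos_left hWlt hεpos
      nlinarith
    have hstrict : ∑ z, dh z * W z < ∑ z, d' z * W z := by
      rw [h3]; linarith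
    have hobj' : ∑ z, d' z * W z ≤ ∑ z, dh z * W z := by
      calc ∑ z, d' z * W z
          = ∑ z, d' z * Γ.muRE c i z *
              (Γ.fRE c i z * Γ.vq - (1 - Γ.fRE c i z) * Γ.vu) := by
            simp [hWdef, mul_assoc]
        _ ≤ ∑ z, dh z * Γ.muRE c i z *
              (Γ.fRE c i z * Γ.vq - (1 - Γ.fRE c i z) * Γ.vu) := hobj
        _ = ∑ z, dh z * W z := by simp [hWdef, mul_assoc]
    linarith
  -- Endgame: pick the threshold
  by_cases hA : (Finset.univ.filter fun z => dh z ≠ 0).Nonempty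
  · set A := (Finset.univ.filter fun z => dh z ≠ 0).image Γ.lhd with hAdef
    have hAne : A.Nonempty := hA.image _
    obtain ⟨z, hz, hzeq⟩ := Finset.mem_image.mp (A.min'_mem hAne)
    refine ⟨A.min' hAne, ⟨z, hzeq⟩, fun x => ⟨?_, ?_⟩⟩
    · intro hxlt
      by_contra h0
      have hmem : Γ.lhd x ∈ A :=
        Finset.mem_image_of_mem _ (Finset.mem_filter.mpr ⟨Finset.mem_univ _, h0⟩)
      exact absurd (A.min'_le _ hmem) (not_le.mpr hxlt)
    · intro hlt
      have hz0 : dh z ≠ 0 := (Finset.mem_filter.mp hz).2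
      have := key z x (by rw [hzeq]; exact hlt)
      tauto
  · have hall : ∀ z, dh z = 0 := by
      intro z
      by_contra h
      exact hA ⟨z, Finset.mem_filter.mpr ⟨Finset.mem_univ _, h⟩⟩
    have hXne : Nonempty ((j : Fin N) → Xs j) := inferInstance
    set B := (Finset.univ : Finset ((j : Fin N) → Xs j)).image Γ.lhd with hBdef
    have hBne : B.Nonempty :=
      ⟨Γ.lhd (Classical.arbitrary _), Finset.mem_image_of_mem _ (Finset.mem_univ _)⟩
    obtain ⟨z, _, hzeq⟩ := Finset.mem_image.mp (B.max'_mem hBne)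
    refine ⟨B.max' hBne, ⟨z, hzeq⟩, fun x => ⟨fun _ => hall x, fun hlt => ?_⟩⟩
    exact absurd (B.le_max' (Γ.lhd x)
      (Finset.mem_image_of_mem _ (Finset.mem_univ _))) (not_le.mpr hlt)
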